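/- Let Y be a finite subset of ℤⁿ containing the standard basis vectors e₁, …, eₙ, such that any n linearly independent elements of Y form a ℤ-basis of ℤⁿ. If the all-ones vector (1, 1, …, 1) belongs to Y, then every element of Y has either all coordinates ≥ 0 or all coordinates ≤ 0 (hence, after changing signatures of some elements, all entries of all elements of Y lie in {0, 1}). -/

import Mathlib

lemma rows_li {n : ℕ} (M : Matrix (Fin n) (Fin n) ℤ) (h : M.det ≠ 0) :
    LinearIndependent ℤ (fun i => M i) := by
  rw [Fintype.linearIndependent_iff]
  intro g hg i
  have hv : Matrix.vecMul g M = 0 := by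
    funext l
    have := congrFun hg l
    simpa [Matrix.vecMul, dotProduct, Finset.sum_apply, mul_comm] using this
  have h2 : Matrix.vecMul g (M * M.adjugate) = 0 := by
    rw [← Matrix.vecMul_vecMul, hv]
    simp
  rw [Matrix.mul_adjugate] at h2
  have := congrFun h2 i
  simp [Matrix.smul_vecMul] at this
  exact this.resolve_right h

/-- For a finite set `Y ⊆ ℤⁿ` containing the standard basis vectors, such that any `n`
linearly independent elements of `Y` form a `ℤ`-basis of `ℤⁿ`: if the all-ones vector
belongs to `Y`, then every element of `Y` has either all coordinates `≥ 0` or all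
coordinates `≤ 0`. -/
theorem stmt11 (n : ℕ) (Y : Finset (Fin n → ℤ))
    (hbasis : ∀ i : Fin n, Pi.single i 1 ∈ Y)
    (hprime : ∀ B : Fin n → (Fin n → ℤ), (∀ i, B i ∈ Y) → LinearIndependent ℤ B →
      (Matrix.of B).det = 1 ∨ (Matrix.of B).det = -1)
    (hones : (fun _ : Fin n => (1 : ℤ)) ∈ Y) :
    ∀ A ∈ Y, (∀ i, 0 ≤ A i) ∨ (∀ i, A i ≤ 0) := by
  intro A hA
  by_contra hcon
  push_neg at hcon
  obtain ⟨⟨i, hi⟩, ⟨j, hj⟩⟩ := hcon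
  -- hi : A i < 0, hj : 0 < A j
  have hij : i ≠ j := by rintro rfl; omega
  set ones : Fin n → ℤ := fun _ => 1 with hones_def
  set N : Matrix (Fin n) (Fin n) ℤ := (1 : Matrix (Fin n) (Fin n) ℤ).updateRow j ones with hN
  -- det N = 1
  have hones_sum : ones = ∑ k, (fun _ : Fin n => (1:ℤ)) k • (1 : Matrix (Fin n) (Fin n) ℤ) k := by
    funext l
    show (1:ℤ) = _; rw [Finset.sum_apply]
    simp [Matrix.one_apply, Finset.sum_apply, Finset.sum_ite_eq]
  have hdetN : N.det = 1 := by
    rw [hN, hones_sum, Matrix.det_updateRow_sum]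
    simp
  -- express A as a combination of rows of N
  set c : Fin n → ℤ := fun k => if k = j then A j else A k - A j with hc
  have hcomb : ∑ k, c k • N k = A := by
    funext l
    rw [Finset.sum_apply]
    rw [← Finset.add_sum_erase _ _ (Finset.mem_univ j)]
    have hNj : N j = ones := by simp [hN]
    have hNk : ∀ k, k ≠ j → N k = (1 : Matrix (Fin n) (Fin n) ℤ) k := by
      intro k hk; simp [hN, Matrix.updateRow_apply, hk]
    by_cases hl : l = j
    · subst hl
      rw [Finset.sum_eq_zero]
      · simp [hc, hNj, hones_def]
      · intro k hk
        rw [Finset.mem_erase] at hk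
        simp [hc, hk.1, hNk k hk.1, Matrix.one_apply, Ne.symm hk.1]
    · rw [Finset.sum_eq_single l]
      · simp [hc, hNj, hNk l hl, hl, Matrix.one_apply, hones_def]
      · intro k hk hkl
        rw [Finset.mem_erase] at hk
        simp [hc, hk.1, hNk k hk.1, Matrix.one_apply, hkl]
      · intro h; exact absurd (Finset.mem_erase.mpr ⟨hl, Finset.mem_univ l⟩) h
  set M : Matrix (Fin n) (Fin n) ℤ := N.updateRow i A with hM
  have hdetM : M.det = A i - A j := by
    have h1 : M.det = c i • N.det := by
      rw [hM, ← hcomb]; exact Matrix.det_updateRow_sum N i c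
    rw [h1, hdetN, smul_eq_mul, mul_one, hc]
    simp [hij]
  set B : Fin n → Fin n → ℤ := fun k => M k with hB
  have hBY : ∀ k, B k ∈ Y := by
    intro k
    by_cases hk : k = i
    · subst hk; simpa [hB, hM] using hA
    · by_cases hk2 : k = j
      · subst hk2
        have : B k = ones := by simp [hB, hM, Matrix.updateRow_apply, hk, hN]
        rw [this]; exact hones
      · have : B k = Pi.single k 1 := by
          funext l
          simp [hB, hM, Matrix.updateRow_apply, hk, hk2, hN, Matrix.one_apply,
            Pi.single_apply, eq_comm]
        rw [this]; exact hbasis k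
  have hLI : LinearIndependent ℤ B := by
    apply rows_li
    rw [hdetM]
    omega
  have := hprime B hBY hLI
  have hMB : (Matrix.of B).det = M.det := rfl
  rw [hMB, hdetM] at this
  omega
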